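/- Let $\lambda$ be a differentiable non-increasing function on $[0,1]$ with $\sup_{t\in[0,1]} \lambda'(t) < -d$ for some $d>0$, and let $\Lambda(t) = \int_0^t \lambda(u)\,du$. Let $g$ be the generalized inverse of $\lambda$ (with $g$ constant on $(-\infty,\lambda(1)]$ and $[\lambda(0),\infty)$, taking values in $[0,1]$). Then for all $u \in [0,1]$ and all $a \in \mathbb{R}$: $\Lambda(u) - \Lambda(g(a)) \leq (u - g(a))\,a - \frac{d}{2}(u - g(a))^2$. -/

import Mathlib

open Set

/-- Generalized inverse of a nonincreasing function `λ` on `[0,1]`: the greatest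
`t ∈ [0,1]` with `λ(t) ≥ a`, with the convention `sup ∅ = 0`. -/
noncomputable def gInv (lam : ℝ → ℝ) (a : ℝ) : ℝ :=
  sSup {t | t ∈ Icc (0 : ℝ) 1 ∧ a ≤ lam t}

/-- Taylor-type concavity bound: if `λ` is differentiable on `[0,1]` with
`sup_{t∈[0,1]} λ'(t) < -d`, `Λ(t) = ∫₀ᵗ λ`, and `g` is the generalized inverse
of `λ`, then `Λ(u) - Λ(g(a)) ≤ (u - g(a)) a - (d/2)(u - g(a))²` for all
`u ∈ [0,1]` and all real `a`. -/
theorem concave_taylor_bound (lam lam' : ℝ → ℝ) (d : ℝ) (hd : 0 < d)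
    (hderiv : ∀ t ∈ Icc (0 : ℝ) 1, HasDerivAt lam (lam' t) t)
    (hanti : AntitoneOn lam (Icc (0 : ℝ) 1))
    (hsup : (⨆ t : Icc (0 : ℝ) 1, lam' t) < -d) :
    ∀ u ∈ Icc (0 : ℝ) 1, ∀ a : ℝ,
      (∫ x in (0 : ℝ)..u, lam x) - (∫ x in (0 : ℝ)..(gInv lam a), lam x)
        ≤ (u - gInv lam a) * a - d / 2 * (u - gInv lam a) ^ 2 := by
  intro u hu a
  -- the range of lam' on Icc is bounded above
  have hbdd : BddAbove (Set.range fun t : Icc (0 : ℝ) 1 => lam' t) := by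
    by_contra h
    rw [Real.iSup_of_not_bddAbove h] at hsup
    linarith
  have hle : ∀ t ∈ Icc (0 : ℝ) 1, lam' t ≤ -d := fun t ht =>
    le_of_lt (lt_of_le_of_lt (le_ciSup hbdd ⟨t, ht⟩) hsup)
  have hcont : ContinuousOn lam (Icc (0 : ℝ) 1) := fun t ht =>
    (hderiv t ht).continuousAt.continuousWithinAt
  -- key Taylor bound
  have hanti' : AntitoneOn (fun x => lam x + d * x) (Icc (0 : ℝ) 1) := by
    apply AntitoneOn.mono (antitoneOn_of_deriv_nonpos (convex_Icc (0:ℝ) 1) ?_ ?_ ?_)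
        (le_refl _)
    · exact hcont.add (continuous_const.mul continuous_id).continuousOn
    · intro x hx
      rw [interior_Icc] at hx
      exact ((hderiv x (Ioo_subset_Icc_self hx)).add
        ((hasDerivAt_id x).const_mul d)).differentiableAt.differentiableWithinAt
    · intro x hx
      rw [interior_Icc] at hx
      have hD : HasDerivAt (fun x => lam x + d * x) (lam' x + d * 1) x :=
        (hderiv x (Ioo_subset_Icc_self hx)).add ((hasDerivAt_id x).const_mul d)
      rw [hD.deriv]
      have := hle x (Ioo_subset_Icc_self hx)
      linarith
  have hkey : ∀ s ∈ Icc (0:ℝ) 1, ∀ t ∈ Icc (0:ℝ) 1, s ≤ t →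
      lam t - lam s ≤ -(d * (t - s)) := by
    intro s hs t ht hst
    have := hanti' hs ht hst
    simp only at this
    nlinarith
  -- integral bound for any g, u in [0,1]
  have hInt : ∀ s t : ℝ, s ∈ Icc (0:ℝ) 1 → t ∈ Icc (0:ℝ) 1 →
      IntervalIntegrable lam MeasureTheory.volume s t := by
    intro s t hs ht
    apply ContinuousOn.intervalIntegrable
    apply hcont.mono
    apply uIcc_subset_Icc hs ht
  have hRHS : ∀ g u : ℝ, (∫ x in g..u, (lam g + d * g - d * x)) =
      (u - g) * lam g - d / 2 * (u - g) ^ 2 := by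
    intro g u
    have hsplit := intervalIntegral.integral_sub (a := g) (b := u)
      (f := fun _ => lam g + d * g) (g := fun x => d * x) (μ := MeasureTheory.volume)
      (intervalIntegrable_const)
      (Continuous.intervalIntegrable (by continuity) g u)
    rw [hsplit, intervalIntegral.integral_const, intervalIntegral.integral_const_mul,
      integral_id]
    simp only [smul_eq_mul]
    ring
  have hIB : ∀ g ∈ Icc (0:ℝ) 1, (∫ x in g..u, lam x)
      ≤ (u - g) * lam g - d / 2 * (u - g) ^ 2 := by
    intro g hg
    rw [← hRHS g u]
    rcases le_total g u with hgu | hgu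
    · apply intervalIntegral.integral_mono_on hgu (hInt g u hg hu)
        (((continuous_const.sub (continuous_const.mul continuous_id'))).intervalIntegrable g u)
      intro x hx
      have hx' : x ∈ Icc (0:ℝ) 1 := ⟨le_trans hg.1 hx.1, le_trans hx.2 hu.2⟩
      have := hkey g hg x hx' hx.1
      simp only [Pi.sub_apply, Pi.mul_apply]
      linarith
    · rw [intervalIntegral.integral_symm, intervalIntegral.integral_symm u g]
      apply neg_le_neg
      apply intervalIntegral.integral_mono_on hgu
        (((continuous_const.sub (continuous_const.mul continuous_id'))).intervalIntegrable u g)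
        (hInt u g hu hg)
      intro x hx
      have hx' : x ∈ Icc (0:ℝ) 1 := ⟨le_trans hu.1 hx.1, le_trans hx.2 hg.2⟩
      have := hkey x hx' g hg hx.2
      simp only [Pi.sub_apply, Pi.mul_apply]
      linarith
  -- properties of gInv
  set S : Set ℝ := {t | t ∈ Icc (0 : ℝ) 1 ∧ a ≤ lam t} with hS
  have hmain : gInv lam a ∈ Icc (0:ℝ) 1 ∧ (u - gInv lam a) * (lam (gInv lam a) - a) ≤ 0 := by
    by_cases h0 : lam 0 < a
    · have hempty : S = ∅ := by
        ext t
        simp only [hS, mem_setOf_eq, mem_empty_iff_false, iff_false, not_and]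
        intro ht hat
        have : lam t ≤ lam 0 := hanti (left_mem_Icc.mpr zero_le_one) ht ht.1
        linarith
      have hg0 : gInv lam a = 0 := by
        rw [gInv, ← hS, hempty, Real.sSup_empty]
      rw [hg0]
      refine ⟨left_mem_Icc.mpr zero_le_one, ?_⟩
      apply mul_nonpos_of_nonneg_of_nonpos
      · simpa using hu.1
      · linarith
    · push_neg at h0
      by_cases h1 : a ≤ lam 1
      · have hfull : S = Icc (0:ℝ) 1 := by
          ext t
          simp only [hS, mem_setOf_eq, and_iff_left_iff_imp]
          intro ht
          exact le_trans h1 (hanti ht (right_mem_Icc.mpr zero_le_one) ht.2)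
        have hg1 : gInv lam a = 1 := by
          rw [gInv, ← hS, hfull, csSup_Icc zero_le_one]
        rw [hg1]
        refine ⟨right_mem_Icc.mpr zero_le_one, ?_⟩
        apply mul_nonpos_of_nonpos_of_nonneg
        · linarith [hu.2]
        · linarith
      · push_neg at h1
        obtain ⟨c, hc, hlc⟩ : a ∈ lam '' Icc (0:ℝ) 1 :=
          intermediate_value_Icc' zero_le_one hcont ⟨h1.le, h0⟩
        have hgc : gInv lam a = c := by
          rw [gInv, ← hS]
          apply le_antisymm
          · have hne : S.Nonempty := ⟨c, hc, hlc.ge⟩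
            apply csSup_le hne
            intro t ht
            by_contra hct
            push_neg at hct
            have h2 := hkey c hc t ht.1 hct.le
            rw [hlc] at h2
            have hdpos : 0 < d * (t - c) := mul_pos hd (by linarith)
            linarith [ht.2]
          · have hb : BddAbove S := ⟨1, fun t ht => ht.1.2⟩
            exact le_csSup hb (show c ∈ S from ⟨hc, hlc.ge⟩)
        rw [hgc, hlc]
        exact ⟨hc, by simp⟩
  obtain ⟨hg, hga⟩ := hmain
  have hsub : (∫ x in (0:ℝ)..u, lam x) - (∫ x in (0:ℝ)..(gInv lam a), lam x)
      = ∫ x in (gInv lam a)..u, lam x := by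
    rw [intervalIntegral.integral_interval_sub_left (hInt 0 u (left_mem_Icc.mpr zero_le_one) hu)
      (hInt 0 _ (left_mem_Icc.mpr zero_le_one) hg)]
  rw [hsub]
  have := hIB _ hg
  nlinarith [this, hga]
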